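/- arXiv:2602.17006 — 2 statements merged into one kernel-verified Lean document; each statement's English description precedes it below -/
import Mathlib

section
/- For a Poisson random variable Z with parameter λ > 0 and any positive integer m, the m-th moment satisfies E[Z^m] ≤ (m / log(m/λ + 1))^m. -/
open Real

lemma exp_tsum_aux (x : ℝ) : ∑' n : ℕ, x ^ n / n.factorial = Real.exp x := by
  rw [Real.exp_eq_exp_ℝ, NormedSpace.exp_eq_tsum_div]

lemma pow_le_aux (m : ℕ) (hm : 1 ≤ m) (y : ℝ) (hy : 0 ≤ y) :
    y ^ m ≤ (m : ℝ) ^ m * Real.exp (y - m) := by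
  have hm0 : (0:ℝ) < m := by exact_mod_cast hm
  have h1 : y / m ≤ Real.exp (y / m - 1) := by
    have := Real.add_one_le_exp (y / m - 1)
    linarith
  have h2 : y ≤ m * Real.exp (y / m - 1) := by
    calc y = m * (y / m) := by field_simp
    _ ≤ m * Real.exp (y / m - 1) := by
        exact mul_le_mul_of_nonneg_left h1 hm0.le
  have h3 : y ^ m ≤ ((m : ℝ) * Real.exp (y / m - 1)) ^ m :=
    pow_le_pow_left₀ hy h2 m
  calc y ^ m ≤ ((m : ℝ) * Real.exp (y / m - 1)) ^ m := h3
  _ = (m : ℝ) ^ m * Real.exp (y / m - 1) ^ m := mul_pow _ _ _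
  _ = (m : ℝ) ^ m * Real.exp (y - m) := by
      rw [← Real.exp_nat_mul]
      congr 1
      field_simp

/-- For a Poisson random variable `Z` with parameter `λ > 0` and any positive integer `m`,
the `m`-th moment satisfies `E[Z^m] ≤ (m / log (m/λ + 1))^m`. The expectation is written
as the series `∑' n, n^m * (exp (-λ) * λ^n / n!)`. -/
theorem poisson_moment_bound (lam : ℝ) (hlam : 0 < lam) (m : ℕ) (hm : 1 ≤ m) :
    ∑' n : ℕ, (n : ℝ) ^ m * (Real.exp (-lam) * lam ^ n / n.factorial) ≤
      ((m : ℝ) / Real.log ((m : ℝ) / lam + 1)) ^ m := by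
  have hm0 : (0:ℝ) < m := by exact_mod_cast hm
  set t : ℝ := Real.log ((m : ℝ) / lam + 1) with ht_def
  have hx1 : 1 < (m : ℝ) / lam + 1 := by
    have : 0 < (m : ℝ) / lam := div_pos hm0 hlam
    linarith
  have ht : 0 < t := Real.log_pos hx1
  have hexp_t : Real.exp t = (m : ℝ) / lam + 1 := Real.exp_log (by linarith)
  set C : ℝ := ((m : ℝ) / (Real.exp 1 * t)) ^ m with hC_def
  have hC0 : 0 ≤ C := by positivity
  set g : ℕ → ℝ := fun n => C * Real.exp (-lam) * ((lam * Real.exp t) ^ n / n.factorial)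
    with hg_def
  -- pointwise bound
  have hle : ∀ n : ℕ, (n : ℝ) ^ m * (Real.exp (-lam) * lam ^ n / n.factorial) ≤ g n := by
    intro n
    have key : (n : ℝ) ^ m ≤ C * Real.exp (t * n) := by
      have h := pow_le_aux m hm (t * n) (by positivity)
      have htn : ((n : ℝ)) ^ m = (t * n) ^ m / t ^ m := by
        rw [mul_pow]; field_simp
      rw [htn]
      rw [div_le_iff₀ (by positivity)] at *
      calc (t * n) ^ m ≤ (m : ℝ) ^ m * Real.exp (t * n - m) := h
      _ = C * Real.exp (t * n) * t ^ m := by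
          rw [hC_def, div_pow, mul_pow]
          rw [Real.exp_sub, ← Real.exp_nat_mul]
          have he : Real.exp 1 ^ m = Real.exp m := by
            rw [← Real.exp_nat_mul]; norm_num
          field_simp [he]
    have hnn : 0 ≤ Real.exp (-lam) * lam ^ n / n.factorial := by positivity
    calc (n : ℝ) ^ m * (Real.exp (-lam) * lam ^ n / n.factorial)
        ≤ C * Real.exp (t * n) * (Real.exp (-lam) * lam ^ n / n.factorial) :=
          mul_le_mul_of_nonneg_right key hnn
    _ = g n := by
        rw [hg_def]
        simp only []
        rw [mul_pow, ← Real.exp_nat_mul]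
        ring_nf
    -- summability
  have hgsum : Summable g := by
    apply Summable.mul_left
    exact Real.summable_pow_div_factorial _
  have hfsum : Summable (fun n : ℕ => (n : ℝ) ^ m * (Real.exp (-lam) * lam ^ n / n.factorial)) := by
    apply Summable.of_nonneg_of_le (fun n => by positivity) hle hgsum
  have htsum : ∑' n, g n = C * Real.exp (-lam) * Real.exp (lam * Real.exp t) := by
    rw [hg_def, tsum_mul_left, exp_tsum_aux]
  calc ∑' n : ℕ, (n : ℝ) ^ m * (Real.exp (-lam) * lam ^ n / n.factorial)
      ≤ ∑' n, g n := Summable.tsum_le_tsum hle hfsum hgsum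
  _ = C * Real.exp (-lam) * Real.exp (lam * Real.exp t) := htsum
  _ = ((m : ℝ) / t) ^ m := by
      rw [hexp_t, hC_def]
      have h1 : lam * ((m : ℝ) / lam + 1) = (m : ℝ) + lam := by field_simp
      have he : Real.exp 1 ^ m = Real.exp m := by
        rw [← Real.exp_nat_mul]; norm_num
      have hee : Real.exp (-lam) * Real.exp ((m : ℝ) + lam) = Real.exp m := by
        rw [← Real.exp_add]; ring_nf
      rw [h1, div_pow, mul_pow, he, mul_assoc, hee, div_pow]
      have h2 : Real.exp (m : ℝ) ≠ 0 := Real.exp_ne_zero _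
      field_simp
end

section
/- In dimension 2, let x, y be distinct points and B_{x,y} := B(x,|x−y|) ∩ B(y,|x−y|) be the lens of the relative neighborhood graph. Then the circular sector with apex x, radius |x−y|, angular width 2π/3, and axis through y is contained in B_{x,y}. -/
open InnerProductGeometry Metric

/-- In dimension 2, for distinct points `x, y` the circular sector with apex `x`, radius
`|x − y|`, angular width `2π/3` (i.e. half-angle `π/3`) and axis through `y` is contained
in the lens `B(x, |x−y|) ∩ B(y, |x−y|)` of the relative neighborhood graph. -/
theorem sector_subset_lens (x y : EuclideanSpace ℝ (Fin 2)) (hxy : x ≠ y) :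
    {z : EuclideanSpace ℝ (Fin 2) |
        dist z x ≤ dist x y ∧ InnerProductGeometry.angle (z - x) (y - x) ≤ Real.pi / 3} ⊆
      Metric.closedBall x (dist x y) ∩ Metric.closedBall y (dist x y) := by
  rintro z ⟨hd, ha⟩
  constructor
  · simpa [Metric.mem_closedBall] using hd
  · simp only [Metric.mem_closedBall]
    have hcos : (1 : ℝ) / 2 ≤ Real.cos (angle (z - x) (y - x)) := by
      have := Real.cos_le_cos_of_nonneg_of_le_pi (angle_nonneg (z - x) (y - x))
        (by linarith [Real.pi_pos] : Real.pi / 3 ≤ Real.pi) ha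
      rwa [Real.cos_pi_div_three] at this
    have hcos1 : Real.cos (angle (z - x) (y - x)) ≤ 1 := Real.cos_le_one _
    have hinner : Real.cos (angle (z - x) (y - x)) * (‖z - x‖ * ‖y - x‖)
        = (inner ℝ (z - x) (y - x) : ℝ) := cos_angle_mul_norm_mul_norm _ _
    have hnorm : ‖z - y‖ ^ 2 = ‖z - x‖ ^ 2 - 2 * (inner ℝ (z - x) (y - x) : ℝ) + ‖y - x‖ ^ 2 := by
      have : z - y = (z - x) - (y - x) := by abel
      rw [this, norm_sub_sq_real (z - x) (y - x)]
    have hzx : ‖z - x‖ ≤ ‖y - x‖ := by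
      have hdy : dist x y = ‖y - x‖ := by rw [dist_eq_norm, norm_sub_rev]
      rw [dist_eq_norm] at hd; rw [hdy] at hd; exact hd
    have h0 : (0:ℝ) ≤ ‖z - x‖ := norm_nonneg _
    have : ‖z - y‖ ^ 2 ≤ ‖y - x‖ ^ 2 := by nlinarith [mul_le_mul_of_nonneg_right hcos (mul_nonneg h0 (norm_nonneg (y - x))), mul_le_mul_of_nonneg_left hzx h0]
    have hfin : ‖z - y‖ ≤ ‖y - x‖ := by
      nlinarith [norm_nonneg (z - y), norm_nonneg (y - x)]
    calc dist z y = ‖z - y‖ := dist_eq_norm _ _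
    _ ≤ ‖y - x‖ := hfin
    _ = dist x y := by rw [dist_eq_norm, norm_sub_rev]
end
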